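/- For the metric g = r^{-2}(1-r^{-3})^{-1} dr² + r²(1-r^{-3}) dξ² + r² dθ² on [r_h, r_0] × T², the boundary torus Σ = {r = r_0} has mean curvature H = (1-r_0^{-3})^{-1/2}(2 - ½ r_0^{-3}) with respect to the outward normal ∂_r direction, and area element dA = r_0² √(1-r_0^{-3}) dξ dθ. -/

import Mathlib

noncomputable section

/-- Mean curvature of the constant-`r` torus in the diagonal metric
`g = A(r)dr² + B(r)dξ² + C(r)dθ²`, with respect to the outward unit normal
`A^{-1/2}∂_r`: trace of the second fundamental form,
`H = (1/(2√A))(B'/B + C'/C)`. -/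
def meanCurvDiag (A B C : ℝ → ℝ) (r : ℝ) : ℝ :=
  (1 / (2 * Real.sqrt (A r))) * (deriv B r / B r + deriv C r / C r)

/-- Area element density `√(BC)` of the constant-`r` torus in coordinates `ξ, θ`. -/
def areaDensityDiag (B C : ℝ → ℝ) (r : ℝ) : ℝ :=
  Real.sqrt (B r * C r)

private lemma hm_key (r0 s : ℝ) (hne : r0 ≠ 0) (hu : (1:ℝ) - (r0^3)⁻¹ ≠ 0)
    (hs : s^2 = 1 - (r0^3)⁻¹) (hspos : 0 < s) :
    1/(2*(r0⁻¹ * s⁻¹)) * ((2*r0*(1-(r0^3)⁻¹) + r0^2*(3*(r0^4)⁻¹))/(r0^2*(1-(r0^3)⁻¹)) + 2*r0/r0^2)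
      = s⁻¹ * (2 - 1/2*(r0^3)⁻¹) := by
  have hs' : s ≠ 0 := hspos.ne'
  have hu' : r0^3 - 1 ≠ 0 := by
    intro h; apply hu; field_simp; linarith
  have hs3 : s^2 * r0^3 = r0^3 - 1 := by
    rw [hs]; field_simp
  field_simp
  ring_nf
  linear_combination (-1 + 4*r0^3) * hs3

/-- for `g = r^{-2}(1-r^{-3})^{-1}dr² + r²(1-r^{-3})dξ² + r²dθ²`,
the boundary torus `Σ = {r = r_0}` has mean curvature
`H = (1-r_0^{-3})^{-1/2}(2 - ½r_0^{-3})` with respect to the outward normal, and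
area element `dA = r_0²√(1-r_0^{-3}) dξ dθ`. -/
theorem horowitz_myers_boundary_mean_curvature_and_area (r0 : ℝ) (hr0 : 1 < r0) :
    meanCurvDiag
        (fun r => r ^ (-2 : ℤ) * (1 - r ^ (-3 : ℤ))⁻¹)
        (fun r => r ^ 2 * (1 - r ^ (-3 : ℤ)))
        (fun r => r ^ 2) r0
      = (Real.sqrt (1 - r0 ^ (-3 : ℤ)))⁻¹ * (2 - (1/2) * r0 ^ (-3 : ℤ)) ∧
    areaDensityDiag
        (fun r => r ^ 2 * (1 - r ^ (-3 : ℤ)))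
        (fun r => r ^ 2) r0
      = r0 ^ 2 * Real.sqrt (1 - r0 ^ (-3 : ℤ)) := by
  have hpos : (0:ℝ) < r0 := lt_trans one_pos hr0
  have hne : r0 ≠ 0 := hpos.ne'
  have h3 : r0 ^ (-3 : ℤ) = (r0 ^ 3)⁻¹ := by rw [zpow_neg]; norm_cast
  have h4 : r0 ^ (-4 : ℤ) = (r0 ^ 4)⁻¹ := by rw [zpow_neg]; norm_cast
  have h2 : r0 ^ (-2 : ℤ) = (r0 ^ 2)⁻¹ := by rw [zpow_neg]; norm_cast
  have hu : (0:ℝ) < 1 - r0 ^ (-3 : ℤ) := by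
    rw [h3]
    have h31 : (1:ℝ) < r0 ^ 3 := one_lt_pow₀ hr0 (by norm_num)
    have := inv_lt_one_of_one_lt₀ h31
    linarith
  set u : ℝ := 1 - r0 ^ (-3 : ℤ) with hudef
  have hsu : (0:ℝ) < Real.sqrt u := Real.sqrt_pos.mpr hu
  have hB : HasDerivAt (fun r : ℝ => r ^ 2 * (1 - r ^ (-3 : ℤ)))
      (2 * r0 * u + r0 ^ 2 * (3 * r0 ^ (-4 : ℤ))) r0 := by
    have h1 : HasDerivAt (fun r : ℝ => r ^ 2) (2 * r0) r0 := by
      simpa using hasDerivAt_pow 2 r0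
    have h2' : HasDerivAt (fun r : ℝ => (1 - r ^ (-3 : ℤ))) (3 * r0 ^ (-4 : ℤ)) r0 := by
      have := (hasDerivAt_zpow (-3) r0 (Or.inl hne))
      have h : HasDerivAt (fun r : ℝ => 1 - r ^ (-3 : ℤ)) _ r0 := (hasDerivAt_const r0 (1:ℝ)).sub this
      convert h using 1
      push_cast
      ring_nf
    simpa [hudef] using (show HasDerivAt (fun r : ℝ => r ^ 2 * (1 - r ^ (-3 : ℤ))) _ r0 from h1.mul h2')
  have hC : HasDerivAt (fun r : ℝ => r ^ 2) (2 * r0) r0 := by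
    simpa using hasDerivAt_pow 2 r0
  have hdB : deriv (fun r : ℝ => r ^ 2 * (1 - r ^ (-3 : ℤ))) r0
      = 2 * r0 * u + r0 ^ 2 * (3 * r0 ^ (-4 : ℤ)) := hB.deriv
  have hdC : deriv (fun r : ℝ => r ^ 2) r0 = 2 * r0 := hC.deriv
  have hsA : Real.sqrt (r0 ^ (-2 : ℤ) * u⁻¹) = r0⁻¹ * (Real.sqrt u)⁻¹ := by
    rw [Real.sqrt_mul (by rw [h2]; positivity), Real.sqrt_inv]
    congr 1
    rw [h2, show (r0 ^ 2)⁻¹ = (r0⁻¹) ^ 2 by rw [inv_pow], Real.sqrt_sq (by positivity)]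
  constructor
  · unfold meanCurvDiag
    simp only [hdB, hdC, ← hudef, hsA]
    have hu3 : u = 1 - (r0 ^ 3)⁻¹ := by rw [hudef, h3]
    rw [hu3, h3, h4]
    exact hm_key r0 (Real.sqrt u) hne (by rw [← hu3]; exact hu.ne')
      (by rw [Real.sq_sqrt hu.le, hu3]) (by rwa [hu3] at hsu)
  · unfold areaDensityDiag
    simp only
    rw [show r0 ^ 2 * u * r0 ^ 2 = (r0 ^ 2) ^ 2 * u by ring,
      Real.sqrt_mul (by positivity), Real.sqrt_sq (by positivity)]

end
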